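/- arXiv:2405.16461 — 4 statements merged into one kernel-verified Lean document; each statement's English description precedes it below -/
import Mathlib

section
/- Let q, x_1, …, x_d be points in ℝ^d with the x_i distinct from q, and set u_i = q - x_i for i = 1,…,d. Suppose the d-th standard basis vector e_d lies in the interior of the conical hull Cone(u_1,…,u_d). Then for every hyperplane H of ℝ^d containing q but not containing q + e_d, at least one of the points x_1,…,x_d lies strictly on the opposite side of H from q + e_d. -/
open EuclideanSpace

/-- If `e_d` lies in the interior of the conical hull of the vectors `q - x i`
(i.e. it is a strictly positive combination of them), then any hyperplane through `q`
not containing `q + e_d` (with normal `f`, so `⟪f, e_d⟫ ≠ 0`) has at least one `x i`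
strictly on the opposite side from `q + e_d`. -/
theorem stmt_1 (d : ℕ) (hd : 1 ≤ d)
    (q : EuclideanSpace ℝ (Fin d)) (x : Fin d → EuclideanSpace ℝ (Fin d))
    (hx : ∀ i, x i ≠ q)
    (b : Fin d → ℝ) (hb : ∀ i, 0 < b i)
    (hcone : (EuclideanSpace.single (Fin.last (d - 1) |>.cast (by omega)) (1 : ℝ)) =
      ∑ i, b i • (q - x i))
    (f : EuclideanSpace ℝ (Fin d)) (hf : f ≠ 0)
    (hfe : inner ℝ f (EuclideanSpace.single (Fin.last (d - 1) |>.cast (by omega)) (1 : ℝ))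
      ≠ (0 : ℝ)) :
    ∃ i, inner ℝ f (x i - q) *
      inner ℝ f (EuclideanSpace.single (Fin.last (d - 1) |>.cast (by omega)) (1 : ℝ)) < (0 : ℝ) := by
  rw [hcone] at hfe ⊢
  have hfs : (inner ℝ f (∑ i, b i • (q - x i)) : ℝ) = ∑ i, b i * inner ℝ f (q - x i) := by
    rw [inner_sum]
    exact Finset.sum_congr rfl fun i _ => real_inner_smul_right f _ (b i)
  set t : ℝ := ∑ i, b i * inner ℝ f (q - x i) with ht
  rw [hfs] at hfe
  have key : (0:ℝ) < ∑ i, b i * ((inner ℝ f (q - x i) : ℝ) * t) := by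
    have : (0:ℝ) < t * t := mul_self_pos.mpr hfe
    calc (0:ℝ) < t * t := this
    _ = ∑ i, b i * ((inner ℝ f (q - x i) : ℝ) * t) := by
        conv_lhs => rw [ht, Finset.sum_mul]
        exact Finset.sum_congr rfl fun i _ => by ring
  have hsum : ∑ i : Fin d, (0:ℝ) < ∑ i, b i * ((inner ℝ f (q - x i) : ℝ) * t) := by
    simpa using key
  obtain ⟨i, _, hi⟩ := Finset.exists_lt_of_sum_lt hsum
  refine ⟨i, ?_⟩
  have hbi := hb i
  have h3 : (inner ℝ f (x i - q) : ℝ) = - inner ℝ f (q - x i) := by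
    rw [← inner_neg_right]; congr 1; abel
  rw [hfs, h3]
  nlinarith
end

section
/- Let q, x_1, …, x_d be points in ℝ^d, and set u_i = q - x_i. Suppose e_d lies in the interior of Cone(u_1,…,u_d), written as e_d = Σ b_i u_i with all b_i > 0. If H is a hyperplane containing both q and q + e_d such that all points of {x_1,…,x_d} \ H lie (weakly) on one side of H, then x_1,…,x_d all lie in H. -/
/-- If `e_d = ∑ b i • (q - x i)` with all `b i > 0`, and `H` is a hyperplane (with unit
normal `f`) containing both `q` and `q + e_d` such that all the `x i` lie weakly on one
side of `H`, then all `x i` lie in `H`. -/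
theorem stmt_2 (d : ℕ) (hd : 1 ≤ d)
    (q : EuclideanSpace ℝ (Fin d)) (x : Fin d → EuclideanSpace ℝ (Fin d))
    (b : Fin d → ℝ) (hb : ∀ i, 0 < b i)
    (hcone : (EuclideanSpace.single (⟨d - 1, by omega⟩ : Fin d) (1 : ℝ)) =
      ∑ i, b i • (q - x i))
    (f : EuclideanSpace ℝ (Fin d)) (hf : f ≠ 0)
    (hfe : inner ℝ f (EuclideanSpace.single (⟨d - 1, by omega⟩ : Fin d) (1 : ℝ)) = (0 : ℝ))
    (hside : ∀ i, inner ℝ f (x i - q) ≤ (0 : ℝ)) :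
    ∀ i, inner ℝ f (x i - q) = (0 : ℝ) := by
  have hsum : ∑ i, b i * (inner ℝ f (x i - q) : ℝ) = 0 := by
    have := hfe
    rw [hcone, inner_sum] at this
    have h2 : ∑ i, b i * (inner ℝ f (q - x i) : ℝ) = 0 := by
      simp only [real_inner_smul_right] at this; exact this
    have h3 : ∀ i, (inner ℝ f (q - x i) : ℝ) = - inner ℝ f (x i - q) := by
      intro i
      rw [← inner_neg_right]; congr 1; abel
    calc ∑ i, b i * (inner ℝ f (x i - q) : ℝ)
        = - ∑ i, b i * (inner ℝ f (q - x i) : ℝ) := by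
          rw [← Finset.sum_neg_distrib]
          exact Finset.sum_congr rfl fun i _ => by rw [h3]; ring
      _ = 0 := by rw [h2]; ring
  intro i
  have hall : ∀ j ∈ Finset.univ, b j * (inner ℝ f (x j - q) : ℝ) ≤ 0 := fun j _ =>
    mul_nonpos_of_nonneg_of_nonpos (hb j).le (hside j)
  have := (Finset.sum_eq_zero_iff_of_nonpos hall).mp hsum i (Finset.mem_univ i)
  rcases mul_eq_zero.mp this with h | h
  · exact absurd h (hb i).ne'
  · exact h
end

section
/- Fix a_1, …, a_{d+1} ∈ (0,∞). For Lebesgue-almost all (x_1,…,x_{d+1}) ∈ (ℝ^d)^{d+1}, the intersection ∩_{i=1}^{d+1} ∂B(x_i, a_i) is empty. -/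
open Metric MeasureTheory Set Function Filter Topology

namespace Stmt6Aux

abbrev Ed (d : ℕ) := EuclideanSpace ℝ (Fin d)

lemma meas_dep (d m : ℕ) :
    MeasurableSet {y : Fin m → Ed d | ¬ AffineIndependent ℝ y} := by
  rcases Nat.eq_zero_or_pos m with rfl | hm
  · convert MeasurableSet.empty
    ext y
    simp [affineIndependent_of_subsingleton ℝ y]
  · set i0 : Fin m := ⟨0, hm⟩
    have hset : {y : Fin m → Ed d | AffineIndependent ℝ y} =
        (fun (y : Fin m → Ed d) (w : {x : Fin m // x ≠ i0}) => y w - y i0) ⁻¹'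
          {v | LinearIndependent ℝ v} := by
      ext y
      simpa [vsub_eq_sub] using affineIndependent_iff_linearIndependent_vsub ℝ y i0
    have hc : Continuous (fun (y : Fin m → Ed d) (w : {x : Fin m // x ≠ i0}) => y w - y i0) :=
      continuous_pi fun w => (continuous_apply _).sub (continuous_apply _)
    have hmeas : MeasurableSet {y : Fin m → Ed d | AffineIndependent ℝ y} := by
      rw [hset]
      exact (isOpen_setOf_linearIndependent.preimage hc).measurableSet
    rw [← Set.compl_setOf]
    exact hmeas.compl

lemma span_ne_top {d k : ℕ} (hd : 1 ≤ d) (hk : k ≤ d) (y : Fin k → Ed d) :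
    affineSpan ℝ (Set.range y) ≠ ⊤ := by
  intro h
  have hdir : vectorSpan ℝ (Set.range y) = ⊤ := by
    rw [← direction_affineSpan, h, AffineSubspace.direction_top]
  have hfr : Module.finrank ℝ (Ed d) = d := finrank_euclideanSpace_fin
  rcases k with _ | n
  · rw [Set.range_eq_empty y, vectorSpan_empty] at hdir
    have : Nontrivial (Ed d) :=
      Module.nontrivial_of_finrank_pos (by rw [hfr]; omega)
    exact bot_ne_top hdir
  · have hle := finrank_vectorSpan_range_le ℝ y (n := n) (by simp)
    rw [hdir, finrank_top, hfr] at hle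
    omega

lemma cons_indep {d k : ℕ} {y : Fin k → Ed d} (hy : AffineIndependent ℝ y)
    {z : Ed d} (hz : z ∉ affineSpan ℝ (Set.range y)) :
    AffineIndependent ℝ (Fin.insertNth 0 z y) := by
  set x : Fin (k + 1) → Ed d := Fin.insertNth 0 z y with hx
  have hx0 : x 0 = z := by simp [hx]
  have hxs : ∀ w : {j : Fin (k + 1) // j ≠ 0}, x w = y ((w : Fin (k + 1)).pred w.prop) := by
    intro w
    have h1 : x w = Fin.cons (α := fun _ => Ed d) z y w := by simp [hx]
    rw [h1]
    conv_lhs => rw [← Fin.succ_pred (w : Fin (k + 1)) w.prop]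
    rw [Fin.cons_succ]
  have hemb : Function.Injective
      (fun w : {j : Fin (k + 1) // j ≠ 0} => (w : Fin (k + 1)).pred w.prop) := by
    intro w1 w2 h
    apply Subtype.ext
    simpa [Fin.pred_inj] using h
  apply AffineIndependent.affineIndependent_of_notMem_span (i := (0 : Fin (k + 1)))
  · have := hy.comp_embedding ⟨_, hemb⟩
    convert this using 1
    · exact rfl
    funext w
    simpa using hxs w
  · rw [hx0]
    intro hmem
    apply hz
    have himg : x '' {j | j ≠ 0} ⊆ Set.range y := by
      rintro _ ⟨w, hw, rfl⟩
      exact ⟨(w : Fin (k + 1)).pred hw, (hxs ⟨w, hw⟩).symm⟩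
    exact affineSpan_mono ℝ himg hmem

lemma ae_affineIndependent (d : ℕ) (hd : 1 ≤ d) :
    ∀ k, k ≤ d → ∀ᵐ y ∂(volume : Measure (Fin k → Ed d)), AffineIndependent ℝ y := by
  intro k
  induction k with
  | zero =>
    intro _
    filter_upwards with y
    exact affineIndependent_of_subsingleton ℝ y
  | succ k IH =>
    intro hk
    have hk' : k ≤ d := Nat.le_of_succ_le hk
    have IH' := IH hk'
    rw [ae_iff]
    have hBm : MeasurableSet {y : Fin (k+1) → Ed d | ¬ AffineIndependent ℝ y} := meas_dep d (k+1)
    set B : Set (Fin (k+1) → Ed d) := {y | ¬ AffineIndependent ℝ y} with hB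
    show volume B = 0
    set e := MeasurableEquiv.piFinSuccAbove (fun _ : Fin (k+1) => Ed d) 0 with he
    have hvp := (volume_preserving_piFinSuccAbove (fun _ : Fin (k+1) => Ed d) 0).symm e
    have h1 : volume (e.symm ⁻¹' B) = volume B := hvp.measure_preimage_equiv B
    rw [← h1]
    set S : Set (Ed d × (Fin k → Ed d)) := e.symm ⁻¹' B with hS
    have hSm : MeasurableSet S := e.symm.measurable hBm
    have h2 : (volume : Measure (Ed d × (Fin k → Ed d))) S
        = ((volume : Measure (Fin k → Ed d)).prod (volume : Measure (Ed d)))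
          (Prod.swap ⁻¹' S) := by
      rw [Measure.volume_eq_prod]
      exact Measure.measurePreserving_swap.measure_preimage hSm.nullMeasurableSet |>.symm
    rw [h2, Measure.measure_prod_null ((measurable_swap) hSm)]
    filter_upwards [IH'] with y hy
    have hsub : (Prod.mk y ⁻¹' (Prod.swap ⁻¹' S) : Set (Ed d))
        ⊆ (affineSpan ℝ (Set.range y) : Set (Ed d)) := by
      intro z hz
      by_contra hzs
      apply hz
      show AffineIndependent ℝ (e.symm (z, y))
      have : e.symm (z, y) = Fin.insertNth 0 z y := by
        simp [he, MeasurableEquiv.piFinSuccAbove_symm_apply]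
        rfl
      rw [this]
      exact cons_indep hy hzs
    exact measure_mono_null hsub
      (Measure.addHaar_affineSubspace volume _ (span_ne_top hd hk' y))

-- Three distinct points equidistant (pointwise) from all the `y i`'s are impossible
-- when `y` is affinely independent with `d` points in `ℝ^d`.
lemma two_points {d : ℕ} (hd : 1 ≤ d) {y : Fin d → Ed d}
    (hy : AffineIndependent ℝ y) (b : Fin d → ℝ) :
    ∃ p q : Ed d, {w : Ed d | ∀ i, dist w (y i) = b i} ⊆ {p, q} := by
  set S := {w : Ed d | ∀ i, dist w (y i) = b i} with hSdef
  have inner_eq : ∀ p q : Ed d, p ∈ S → q ∈ S → ∀ i,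
      2 * (inner ℝ (p - q) (y i) : ℝ) = ‖p‖ ^ 2 - ‖q‖ ^ 2 := by
    intro p q hp hq i
    have h1 : ‖p - y i‖ ^ 2 = ‖q - y i‖ ^ 2 := by
      rw [← dist_eq_norm, ← dist_eq_norm, hp i, hq i]
    rw [norm_sub_sq_real, norm_sub_sq_real] at h1
    rw [inner_sub_left]
    linarith
  have key : ∀ p q r, p ∈ S → q ∈ S → r ∈ S → p ≠ q → p ≠ r → q ≠ r → False := by
    intro p q r hp hq hr hpq hpr hqr
    set i0 : Fin d := ⟨0, hd⟩
    set c : Ed d := y i0 with hc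
    set u : Ed d := p - q with hu
    set v : Ed d := q - r with hv
    have hu0 : u ≠ 0 := sub_ne_zero.2 hpq
    have hv0 : v ≠ 0 := sub_ne_zero.2 hqr
    -- bisector identities
    have bis : ∀ m n : Ed d, m ∈ S → n ∈ S →
        (inner ℝ (m - n) (m + n - (2 : ℝ) • c) : ℝ) = 0 := by
      intro m n hm hn
      have h1 := inner_eq m n hm hn i0
      have h2 : (inner ℝ (m - n) (m + n) : ℝ) = ‖m‖ ^ 2 - ‖n‖ ^ 2 := by
        rw [inner_sub_left, inner_add_right, inner_add_right,
          real_inner_self_eq_norm_sq, real_inner_self_eq_norm_sq,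
          real_inner_comm n m]
        ring
      have h1' : 2 * (inner ℝ (m - n) c : ℝ) = ‖m‖ ^ 2 - ‖n‖ ^ 2 := h1
      rw [inner_sub_right, inner_smul_right, h2]
      linarith
    -- linear independence of u, v
    have huv : LinearIndependent ℝ ![u, v] := by
      rw [LinearIndependent.pair_iff]
      intro s t hst
      have hinner : ∀ w : Ed d, s * (inner ℝ u w : ℝ) + t * (inner ℝ v w : ℝ) = 0 := by
        intro w
        have h0 : (inner ℝ (s • u + t • v) w : ℝ) = 0 := by rw [hst, inner_zero_left]
        rwa [inner_add_left, real_inner_smul_left, real_inner_smul_left] at h0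
      by_cases hs : s = 0
      · subst hs
        constructor
        · rfl
        · by_contra ht
          apply hv0
          have : t • v = 0 := by simpa using hst
          exact (smul_eq_zero.1 this).resolve_left ht
      · exfalso
        -- s * ⟪u, p - r⟫ = 0
        have e1 : (inner ℝ u (p + q - (2:ℝ) • c) : ℝ) = 0 := bis p q hp hq
        have e2 : (inner ℝ v (q + r - (2:ℝ) • c) : ℝ) = 0 := bis q r hq hr
        have e3 : s * (inner ℝ u (q + r - (2:ℝ) • c) : ℝ) = 0 := by
          have := hinner (q + r - (2:ℝ) • c)
          rw [e2] at this
          linarith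
        have e4 : (inner ℝ u (q + r - (2:ℝ) • c) : ℝ) = 0 := by
          rcases mul_eq_zero.1 e3 with h | h
          · exact absurd h hs
          · exact h
        have e5 : (inner ℝ u (p - r) : ℝ) = 0 := by
          have : (inner ℝ u ((p + q - (2:ℝ) • c) - (q + r - (2:ℝ) • c)) : ℝ) = 0 := by
            rw [inner_sub_right, e1, e4, sub_zero]
          have heq : (p + q - (2:ℝ) • c) - (q + r - (2:ℝ) • c) = p - r := by abel
          rwa [heq] at this
        -- t • (p - r) = (t - s) • u
        have e6 : t • (p - r) = (t - s) • u := by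
          have hpr' : p - r = u + v := by rw [hu, hv]; abel
          rw [hpr', smul_add, sub_smul]
          have htv : t • v = -(s • u) := by
            rw [eq_neg_iff_add_eq_zero, add_comm]
            exact hst
          rw [htv]
          abel
        have e7 : t * ‖p - r‖ ^ 2 = 0 := by
          have : (inner ℝ (t • (p - r)) (p - r) : ℝ) = (t - s) * (inner ℝ u (p - r) : ℝ) := by
            rw [e6, real_inner_smul_left]
          rw [real_inner_smul_left, real_inner_self_eq_norm_sq, e5, mul_zero] at this
          exact this
        have hprne : p - r ≠ 0 := sub_ne_zero.2 hpr
        have ht0 : t = 0 := by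
          rcases mul_eq_zero.1 e7 with h | h
          · exact h
          · exact absurd (by
              have := pow_eq_zero_iff (n := 2) (by norm_num) |>.1 h
              exact norm_eq_zero.1 this) hprne
        subst ht0
        apply hs
        have : s • u = 0 := by simpa using hst
        have := (smul_eq_zero.1 this).resolve_right hu0
        exact this
    -- orthogonality and dimension count
    have horth : ∀ i, (inner ℝ u (y i - c) : ℝ) = 0 ∧ (inner ℝ v (y i - c) : ℝ) = 0 := by
      intro i
      constructor
      · have h1 := inner_eq p q hp hq i
        have h2 := inner_eq p q hp hq i0
        rw [inner_sub_right]
        rw [hu, hc]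
        linarith
      · have h1 := inner_eq q r hq hr i
        have h2 := inner_eq q r hq hr i0
        rw [inner_sub_right]
        rw [hv, hc]
        linarith
    have hli := (affineIndependent_iff_linearIndependent_vsub ℝ y i0).1 hy
    have hli' : LinearIndependent ℝ (fun w : {x : Fin d // x ≠ i0} => y w - y i0) := by
      simpa [vsub_eq_sub] using hli
    set U : Submodule ℝ (Ed d) := Submodule.span ℝ {u, v} with hU
    have hmemorth : ∀ w : {x : Fin d // x ≠ i0}, (y w - y i0) ∈ Uᗮ := by
      intro w
      rw [Submodule.mem_orthogonal]
      intro x hx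
      refine Submodule.span_induction ?_ ?_ ?_ ?_ hx
      · intro z hz
        simp only [Set.mem_insert_iff, Set.mem_singleton_iff] at hz
        rcases hz with rfl | rfl
        · exact (horth w).1
        · exact (horth w).2
      · exact inner_zero_left _
      · intro x' y' _ _ hx' hy'
        rw [inner_add_left, hx', hy', add_zero]
      · intro a x' _ hx'
        rw [real_inner_smul_left, hx', mul_zero]
    have hWle : Submodule.span ℝ (Set.range (fun w : {x : Fin d // x ≠ i0} => y w - y i0)) ≤ Uᗮ := by
      rw [Submodule.span_le]
      rintro _ ⟨w, rfl⟩
      exact hmemorth w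
    have hfr1 : Module.finrank ℝ
        (Submodule.span ℝ (Set.range (fun w : {x : Fin d // x ≠ i0} => y w - y i0))) = d - 1 := by
      rw [finrank_span_eq_card hli']
      simp [Fintype.card_subtype_compl]
    have hfr2 : Module.finrank ℝ U = 2 := by
      have hrange : ({u, v} : Set (Ed d)) = Set.range ![u, v] := by
        ext x
        simp [Fin.exists_fin_two, or_comm]
      rw [hU, hrange, finrank_span_eq_card huv]
      simp
    have hfr3 : Module.finrank ℝ U + Module.finrank ℝ (Uᗮ) = d := by
      rw [Submodule.finrank_add_finrank_orthogonal]
      exact finrank_euclideanSpace_fin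
    have hfr4 := Submodule.finrank_mono hWle
    rw [hfr1] at hfr4
    omega
  -- conclude
  by_cases hS : S.Nonempty
  · obtain ⟨p, hp⟩ := hS
    by_cases h2 : ∃ q ∈ S, q ≠ p
    · obtain ⟨q, hq, hqp⟩ := h2
      refine ⟨p, q, fun r hr => ?_⟩
      by_contra hh
      rw [Set.mem_insert_iff, Set.mem_singleton_iff] at hh
      push_neg at hh
      exact key p q r hp hq hr (Ne.symm hqp) (Ne.symm hh.1) (Ne.symm hh.2)
    · push_neg at h2
      exact ⟨p, p, fun r hr => by simp [h2 r hr]⟩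
  · exact ⟨0, 0, fun r hr => absurd ⟨r, hr⟩ hS⟩

lemma bad_measurable (d : ℕ) (a : Fin (d + 1) → ℝ) :
    MeasurableSet {x : Fin (d + 1) → Ed d | (⋂ i, sphere (x i) (a i)).Nonempty} := by
  obtain ⟨D, Dc, Dd⟩ := TopologicalSpace.exists_countable_dense (Ed d)
  have hrepr : {x : Fin (d + 1) → Ed d | (⋂ i, sphere (x i) (a i)).Nonempty} =
      ⋂ n : ℕ, ⋃ p ∈ D, {x : Fin (d + 1) → Ed d |
        ∀ i, |dist p (x i) - a i| < 1 / (n + 1)} := by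
    ext x
    simp only [Set.mem_setOf_eq, Set.mem_iInter, Set.mem_iUnion]
    constructor
    · rintro ⟨w, hw⟩
      simp only [Set.mem_iInter, mem_sphere] at hw
      intro n
      obtain ⟨p, hpD, hpw⟩ := Dd.exists_dist_lt w (show (0:ℝ) < 1 / (n + 1) by positivity)
      refine ⟨p, hpD, fun i => ?_⟩
      calc |dist p (x i) - a i| = |dist p (x i) - dist w (x i)| := by rw [hw i]
        _ ≤ dist p w := abs_dist_sub_le p w (x i)
        _ < 1 / (n + 1) := by rwa [dist_comm]
    · intro hx
      choose p hpD hp using hx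
      have hball : ∀ n, p n ∈ closedBall (x 0) (a 0 + 1) := by
        intro n
        have h1 := hp n 0
        have h2 : (1:ℝ) / (n + 1) ≤ 1 := by
          rw [div_le_one (by positivity)]
          linarith [Nat.cast_nonneg (α := ℝ) n]
        rw [mem_closedBall]
        have h3 := (abs_lt.1 h1).2
        have h4 : dist (p n) (x 0) < a 0 + 1 := by linarith
        exact h4.le
      obtain ⟨w, _, φ, hφ, hconv⟩ :=
        (isCompact_closedBall (x 0) (a 0 + 1)).tendsto_subseq hball
      refine ⟨w, ?_⟩
      rw [Set.mem_iInter]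
      intro i
      rw [mem_sphere]
      have t1 : Tendsto (fun n => dist (p (φ n)) (x i)) atTop (𝓝 (dist w (x i))) :=
        (hconv.dist tendsto_const_nhds)
      have t2 : Tendsto (fun n => dist (p (φ n)) (x i)) atTop (𝓝 (a i)) := by
        have hb : ∀ n, ‖dist (p (φ n)) (x i) - a i‖ ≤ 1 / (n + 1) := by
          intro n
          have h1 := (hp (φ n) i).le
          have h2 : (1:ℝ) / (φ n + 1) ≤ 1 / (n + 1) := by
            apply one_div_le_one_div_of_le (by positivity)
            have h3 : n ≤ φ n := hφ.le_apply
            linarith [(Nat.cast_le (α := ℝ)).2 h3]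
          calc ‖dist (p (φ n)) (x i) - a i‖ = |dist (p (φ n)) (x i) - a i| := rfl
            _ ≤ 1 / (φ n + 1) := h1
            _ ≤ 1 / (n + 1) := h2
        have h0 : Tendsto (fun n => dist (p (φ n)) (x i) - a i) atTop (𝓝 0) :=
          squeeze_zero_norm hb tendsto_one_div_add_atTop_nhds_zero_nat
        have := h0.add (tendsto_const_nhds (x := a i))
        simpa using this
      exact tendsto_nhds_unique t1 t2
  rw [hrepr]
  refine MeasurableSet.iInter fun n => MeasurableSet.biUnion Dc fun p _ => ?_
  have : {x : Fin (d + 1) → Ed d | ∀ i, |dist p (x i) - a i| < 1 / (n + 1)}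
      = ⋂ i, {x : Fin (d + 1) → Ed d | |dist p (x i) - a i| < 1 / (n + 1)} := by
    ext x; simp
  rw [this]
  refine MeasurableSet.iInter fun i => ?_
  have hcont : Continuous fun x : Fin (d + 1) → Ed d => |dist p (x i) - a i| :=
    ((continuous_const.dist (continuous_apply i)).sub continuous_const).abs
  exact measurableSet_lt hcont.measurable measurable_const

end Stmt6Aux

open Stmt6Aux in
/-- For fixed positive radii `a 1, …, a (d+1)`, for Lebesgue-almost all tuples of centres
`(x 1, …, x (d+1))` in `(ℝ^d)^{d+1}`, the intersection of the `d+1` spheres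
`∂B(x i, a i)` is empty. -/
theorem stmt_6 (d : ℕ) (hd : 1 ≤ d) (a : Fin (d + 1) → ℝ) (ha : ∀ i, 0 < a i) :
    ∀ᵐ x ∂(volume : Measure (Fin (d + 1) → EuclideanSpace ℝ (Fin d))),
      (⋂ i, sphere (x i) (a i)) = ∅ := by
  haveI : Nontrivial (Ed d) :=
    Module.nontrivial_of_finrank_pos
      (by rw [finrank_euclideanSpace_fin]; omega : 0 < Module.finrank ℝ (Ed d))
  rw [ae_iff]
  have hBeq : {x : Fin (d + 1) → Ed d | ¬ (⋂ i, sphere (x i) (a i)) = ∅}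
      = {x : Fin (d + 1) → Ed d | (⋂ i, sphere (x i) (a i)).Nonempty} := by
    ext x
    simp [Set.nonempty_iff_ne_empty]
  rw [hBeq]
  set B := {x : Fin (d + 1) → Ed d | (⋂ i, sphere (x i) (a i)).Nonempty} with hBdef
  have hBm : MeasurableSet B := bad_measurable d a
  set e := MeasurableEquiv.piFinSuccAbove (fun _ : Fin (d + 1) => Ed d) (Fin.last d) with he
  have hvp := (volume_preserving_piFinSuccAbove (fun _ : Fin (d + 1) => Ed d) (Fin.last d)).symm e
  have h1 : volume (e.symm ⁻¹' B) = volume B := hvp.measure_preimage_equiv B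
  rw [← h1]
  set S : Set (Ed d × (Fin d → Ed d)) := e.symm ⁻¹' B with hS
  have hSm : MeasurableSet S := e.symm.measurable hBm
  have h2 : (volume : Measure (Ed d × (Fin d → Ed d))) S
      = ((volume : Measure (Fin d → Ed d)).prod (volume : Measure (Ed d)))
        (Prod.swap ⁻¹' S) := by
    rw [Measure.volume_eq_prod]
    exact (Measure.measurePreserving_swap.measure_preimage hSm.nullMeasurableSet).symm
  rw [h2, Measure.measure_prod_null (measurable_swap hSm)]
  filter_upwards [ae_affineIndependent d hd d le_rfl] with y hy
  obtain ⟨p, q, hpq⟩ := two_points hd hy (fun j => a (Fin.castSucc j))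
  have hsub : (Prod.mk y ⁻¹' (Prod.swap ⁻¹' S) : Set (Ed d))
      ⊆ sphere p (a (Fin.last d)) ∪ sphere q (a (Fin.last d)) := by
    intro z hz
    have hzB : e.symm (z, y) ∈ B := hz
    obtain ⟨w, hw⟩ := hzB
    simp only [Set.mem_iInter, mem_sphere] at hw
    have hx : e.symm (z, y) = (Fin.last d).insertNth z y := by
      simp [he, MeasurableEquiv.piFinSuccAbove_symm_apply]
      rfl
    rw [hx] at hw
    have hwS : w ∈ {w : Ed d | ∀ j, dist w (y j) = a (Fin.castSucc j)} := by
      intro j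
      have := hw ((Fin.last d).succAbove j)
      rw [Fin.insertNth_apply_succAbove] at this
      simpa [Fin.succAbove_last] using this
    have hwz : dist w z = a (Fin.last d) := by
      have := hw (Fin.last d)
      rwa [Fin.insertNth_apply_same] at this
    have := hpq hwS
    rcases this with rfl | rfl
    · left; rwa [mem_sphere, dist_comm]
    · right; rwa [mem_sphere, dist_comm]
  refine measure_mono_null hsub ?_
  exact measure_union_null (Measure.addHaar_sphere volume p _) (Measure.addHaar_sphere volume q _)
end

section
/- Let d ≥ 1, a > 0, r > 0 and x, y ∈ ℝ^d with ‖y - x‖ ≤ (a/2) r. Then λ_d(B(y, ar) \ B(x, ar)) ≥ θ_{d-1} (a/2)^{d-1} r^{d-1} ‖y - x‖. -/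
open Metric MeasureTheory

set_option maxHeartbeats 1000000 in
/-- If `‖y - x‖ ≤ (a/2) r` then the volume of the lune `B(y,ar) \ B(x,ar)` is at least
`θ_{d-1} (a/2)^{d-1} r^{d-1} ‖y - x‖`. -/
theorem stmt_9 (d : ℕ) (hd : 1 ≤ d) (a r : ℝ) (ha : 0 < a) (hr : 0 < r)
    (x y : EuclideanSpace ℝ (Fin d)) (hxy : ‖y - x‖ ≤ (a / 2) * r) :
    ENNReal.ofReal
        ((volume (ball (0 : EuclideanSpace ℝ (Fin (d - 1))) 1)).toReal *
          (a / 2) ^ (d - 1) * r ^ (d - 1) * ‖y - x‖)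
      ≤ volume (closedBall y (a * r) \ closedBall x (a * r)) := by
  obtain ⟨n, rfl⟩ : ∃ n, d = n + 1 := ⟨d - 1, (Nat.succ_pred_eq_of_pos hd).symm⟩
  simp only [Nat.add_sub_cancel]
  set R : ℝ := a * r with hRdef
  set h : ℝ := ‖y - x‖ with hhdef
  have hR : 0 < R := mul_pos ha hr
  set ρ : ℝ := a / 2 * r with hρdef
  have hρ : 0 < ρ := mul_pos (half_pos ha) hr
  have hρR : ρ ≤ R := by
    rw [hρdef, hRdef]
    nlinarith
  rcases eq_or_lt_of_le (norm_nonneg (y - x)) with h0 | h0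
  · rw [hhdef, ← h0, mul_zero, ENNReal.ofReal_zero]
    exact zero_le
  rw [← hhdef] at h0
  -- translation
  have htrans : volume (closedBall y R \ closedBall x R)
      = volume (closedBall (y - x) R \ closedBall 0 R) := by
    rw [← measure_preimage_add volume x (closedBall y R \ closedBall x R)]
    congr 1
    rw [Set.preimage_diff, preimage_add_closedBall, preimage_add_closedBall, sub_self]
  -- rotation
  set e₀ : EuclideanSpace ℝ (Fin (n + 1)) := EuclideanSpace.single 0 1 with he₀
  set w : EuclideanSpace ℝ (Fin (n + 1)) := h • e₀ with hw
  have hnorm : ‖y - x‖ = ‖w‖ := by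
    rw [hw, norm_smul, he₀, EuclideanSpace.norm_single, norm_one, mul_one,
      Real.norm_eq_abs, abs_of_pos h0]
  set e : EuclideanSpace ℝ (Fin (n + 1)) ≃ₗᵢ[ℝ] EuclideanSpace ℝ (Fin (n + 1)) :=
    Submodule.reflection (ℝ ∙ ((y - x) - w))ᗮ with he
  have heu : e (y - x) = w := Submodule.reflection_sub hnorm
  have key : ∀ z : EuclideanSpace ℝ (Fin (n + 1)), dist (e z) w = dist z (y - x) := by
    intro z; rw [← heu, e.dist_map]
  have key2 : ∀ z : EuclideanSpace ℝ (Fin (n + 1)), dist (e z) 0 = dist z 0 := by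
    intro z; rw [dist_zero_right, dist_zero_right, e.norm_map]
  have h1 : e ⁻¹' (closedBall w R \ closedBall 0 R)
      = closedBall (y - x) R \ closedBall 0 R := by
    ext z
    simp only [Set.mem_preimage, Set.mem_diff, mem_closedBall, key, key2]
  have hrot : volume (closedBall (y - x) R \ closedBall 0 R)
      = volume (closedBall w R \ closedBall 0 R) := by
    rw [← h1, e.measurePreserving.measure_preimage
      (((measurableSet_closedBall).diff measurableSet_closedBall).nullMeasurableSet)]
  rw [htrans, hrot]
  -- transfer to ℝ × (Fin n → ℝ)
  set F := (MeasurableEquiv.toLp 2 (Fin (n + 1) → ℝ)).symm with hF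
  set P := MeasurableEquiv.piFinSuccAbove (fun _ : Fin (n + 1) => ℝ) 0 with hP
  set G : ℝ × (Fin n → ℝ) → EuclideanSpace ℝ (Fin (n + 1)) :=
    fun p => F.symm (P.symm p) with hG
  have hGmp : MeasurePreserving G (volume.prod volume) volume :=
    ((EuclideanSpace.volume_preserving_symm_measurableEquiv_toLp (Fin (n + 1))).symm).comp
      ((volume_preserving_piFinSuccAbove (fun _ : Fin (n + 1) => ℝ) 0).symm)
  set T : Set (EuclideanSpace ℝ (Fin (n + 1))) := closedBall w R \ closedBall 0 R with hT
  have hTm : MeasurableSet T := measurableSet_closedBall.diff measurableSet_closedBall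
  have hvol : volume T = (volume.prod volume) (G ⁻¹' T) :=
    (hGmp.measure_preimage hTm.nullMeasurableSet).symm
  rw [hvol]
  -- coordinates of G
  have hGcoord : ∀ (s : ℝ) (v : Fin n → ℝ) (i : Fin (n + 1)),
      (G (s, v) : EuclideanSpace ℝ (Fin (n + 1))) i = (Fin.cons s v : Fin (n + 1) → ℝ) i := by
    intro s v i
    rw [hG]
    simp only [hP, MeasurableEquiv.piFinSuccAbove, MeasurableEquiv.symm_mk,
      MeasurableEquiv.coe_mk, Equiv.symm_symm, Fin.insertNthEquiv_apply]
    change Fin.insertNth (α := fun _ => ℝ) 0 s v i = _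
    rw [Fin.insertNth_zero']
  -- coordinate values of w
  have hw0 : w 0 = h := by simp [hw, he₀]
  have hwj : ∀ j : Fin n, w j.succ = 0 := by
    intro j
    simp [hw, he₀, EuclideanSpace.single_apply, (Fin.succ_ne_zero j)]
  set Q : (Fin n → ℝ) → ℝ := fun v => ∑ j, (v j) ^ 2 with hQ
  have hQ0 : ∀ v, 0 ≤ Q v := fun v => Finset.sum_nonneg fun j _ => sq_nonneg _
  have hdistw : ∀ (s : ℝ) (v : Fin n → ℝ),
      dist (G (s, v)) w = Real.sqrt ((s - h) ^ 2 + Q v) := by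
    intro s v
    rw [EuclideanSpace.dist_eq]
    congr 1
    rw [Fin.sum_univ_succ]
    simp only [hGcoord, Fin.cons_zero, Fin.cons_succ, hw0, hwj, Real.dist_eq, sq_abs,
      sub_zero, hQ]
  have hdist0 : ∀ (s : ℝ) (v : Fin n → ℝ),
      dist (G (s, v)) 0 = Real.sqrt (s ^ 2 + Q v) := by
    intro s v
    rw [EuclideanSpace.dist_eq]
    congr 1
    rw [Fin.sum_univ_succ]
    have z0 : ∀ i : Fin (n + 1), (0 : EuclideanSpace ℝ (Fin (n + 1))) i = 0 := fun _ => rfl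
    simp only [hGcoord, Fin.cons_zero, Fin.cons_succ, z0, Real.dist_eq, sq_abs,
      sub_zero, hQ]
  set g : (Fin n → ℝ) → ℝ := fun v => Real.sqrt (R ^ 2 - Q v) with hg
  have hρ2R2 : ρ ^ 2 ≤ R ^ 2 := by nlinarith
  -- key inclusion
  have hsub : ∀ v : Fin n → ℝ, Q v < ρ ^ 2 →
      Set.Ioc (g v) (g v + h) ⊆ {s : ℝ | (s, v) ∈ G ⁻¹' T} := by
    intro v hv s hs
    have hQle : Q v ≤ R ^ 2 := le_trans hv.le hρ2R2
    have hg2 : (g v) ^ 2 = R ^ 2 - Q v := Real.sq_sqrt (by linarith)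
    have hg0 : 0 ≤ g v := Real.sqrt_nonneg _
    have hRρ : R ^ 2 = 4 * ρ ^ 2 := by rw [hρdef, hRdef]; ring
    have hhg : h ≤ g v := by
      rw [hg]
      conv_lhs => rw [show h = Real.sqrt (h ^ 2) from (Real.sqrt_sq h0.le).symm]
      apply Real.sqrt_le_sqrt
      nlinarith [hxy, hv, hρ, h0]
    simp only [Set.mem_Ioc] at hs
    simp only [Set.mem_preimage, hT, Set.mem_diff, mem_closedBall, Set.mem_setOf_eq]
    have hup : (s - h) ^ 2 ≤ (g v) ^ 2 :=
      pow_le_pow_left₀ (by linarith [hs.1]) (by linarith [hs.2]) 2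
    have hlo : (g v) ^ 2 < s ^ 2 := by
      have := pow_lt_pow_left₀ hs.1 hg0 (two_ne_zero)
      exact this
    constructor
    · rw [hdistw]
      conv_rhs => rw [show R = Real.sqrt (R ^ 2) from (Real.sqrt_sq hR.le).symm]
      apply Real.sqrt_le_sqrt
      linarith
    · rw [hdist0, not_le]
      rw [Real.lt_sqrt hR.le]
      linarith
  -- measurability
  have hWm : MeasurableSet {v : Fin n → ℝ | Q v < ρ ^ 2} := by
    apply measurableSet_lt _ measurable_const
    exact Finset.measurable_sum _ fun j _ => (measurable_pi_apply j).pow_const 2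
  set W : Set (Fin n → ℝ) := {v | Q v < ρ ^ 2} with hW
  -- volume of W
  have hWvol : volume W
      = ENNReal.ofReal (ρ ^ n) * volume (ball (0 : EuclideanSpace ℝ (Fin n)) 1) := by
    have hpre : ((MeasurableEquiv.toLp 2 (Fin n → ℝ)).symm) ⁻¹' W
        = ball (0 : EuclideanSpace ℝ (Fin n)) ρ := by
      ext z
      simp only [Set.mem_preimage, hW, Set.mem_setOf_eq, mem_ball, dist_zero_right]
      rw [EuclideanSpace.norm_eq]
      rw [Real.sqrt_lt' hρ]
      have hco : ∀ i, (((MeasurableEquiv.toLp 2 (Fin n → ℝ)).symm) z) i = z i := fun _ => rfl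
      simp only [hQ, hco, Real.norm_eq_abs, sq_abs]
    have hWvol' : volume W = volume (ball (0 : EuclideanSpace ℝ (Fin n)) ρ) := by
      rw [← (EuclideanSpace.volume_preserving_symm_measurableEquiv_toLp (Fin n)).measure_preimage
        hWm.nullMeasurableSet, hpre]
    rw [hWvol']
    rcases Nat.eq_zero_or_pos n with hn | hn
    · subst hn
      have hball : ∀ t : ℝ, 0 < t → ball (0 : EuclideanSpace ℝ (Fin 0)) t = Set.univ := by
        intro t ht
        ext z
        simp only [mem_ball, Set.mem_univ, iff_true]
        rw [Subsingleton.elim z 0, dist_self]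
        exact ht
      rw [hball ρ hρ, hball 1 one_pos, pow_zero, ENNReal.ofReal_one, one_mul]
    · haveI : Nontrivial (EuclideanSpace ℝ (Fin n)) := by
        refine ⟨⟨0, EuclideanSpace.single ⟨0, hn⟩ 1, fun hcon => ?_⟩⟩
        have := congrArg (fun z : EuclideanSpace ℝ (Fin n) => z ⟨0, hn⟩) hcon
        simp [EuclideanSpace.single_apply] at this
      rw [Measure.addHaar_ball volume (0 : EuclideanSpace ℝ (Fin n)) hρ.le,
        finrank_euclideanSpace_fin]
  -- Fubini lower bound
  have hθtop : volume (ball (0 : EuclideanSpace ℝ (Fin n)) 1) ≠ ⊤ := measure_ball_lt_top.ne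
  rw [Measure.prod_apply_symm (hGmp.measurable hTm)]
  have step1 : ENNReal.ofReal
      ((volume (ball (0 : EuclideanSpace ℝ (Fin n)) 1)).toReal * (a / 2) ^ n * r ^ n * h)
      = ENNReal.ofReal h * volume W := by
    rw [hWvol]
    rw [show (volume (ball (0 : EuclideanSpace ℝ (Fin n)) 1)).toReal * (a / 2) ^ n
        * r ^ n * h
      = h * (ρ ^ n * (volume (ball (0 : EuclideanSpace ℝ (Fin n)) 1)).toReal) by
        rw [hρdef, mul_pow]; ring]
    rw [ENNReal.ofReal_mul h0.le, ENNReal.ofReal_mul (pow_nonneg hρ.le n),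
      ENNReal.ofReal_toReal hθtop]
  refine le_trans (le_of_eq step1) ?_
  rw [← setLIntegral_const W (ENNReal.ofReal h)]
  refine le_trans ?_ (setLIntegral_le_lintegral W _)
  apply lintegral_mono_ae
  rw [ae_restrict_iff' hWm]
  refine Filter.Eventually.of_forall fun v hv => ?_
  calc ENNReal.ofReal h = volume (Set.Ioc (g v) (g v + h)) := by
        rw [Real.volume_Ioc, add_sub_cancel_left]
    _ ≤ volume ((fun s => (s, v)) ⁻¹' (G ⁻¹' T)) := measure_mono (hsub v hv)
end
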